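/- Let n, k be odd positive integers with gcd(n,k)=1 and let d be an even positive integer such that ((3^k+1)/2)·d ≡ (3^n+1)/2 (mod 3^n−1). Then for the power function f(x)=x^d on F_{3^n} and c = −1 one has _cΔ_f ≤ 6; equivalently, for every a, b ∈ F_{3^n} the equation (x+a)^d + x^d = b has at most 6 solutions x ∈ F_{3^n}. -/

import Mathlib

private lemma nine_pow_mod {j m : ℕ} (hm : 9 % m = 1) : 9 ^ j % m = 1 % m := by
  rw [Nat.pow_mod, hm]
  simp [Nat.pow_mod]

private lemma three_pow_mod4 {m : ℕ} (hm : Odd m) : 3 ^ m % 4 = 3 := by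
  obtain ⟨j, rfl⟩ := hm
  rw [pow_add, pow_mul, pow_one, Nat.mul_mod, Nat.pow_mod]
  norm_num

private lemma three_pow_mod8 {m : ℕ} (hm : Odd m) : 3 ^ m % 8 = 3 := by
  obtain ⟨j, rfl⟩ := hm
  rw [pow_add, pow_mul, pow_one, Nat.mul_mod, Nat.pow_mod]
  norm_num

private lemma halves_odd {m : ℕ} (hm : Odd m) : Odd ((3 ^ m - 1) / 2) := by
  have h4 := three_pow_mod4 hm
  have h := Nat.div_add_mod (3 ^ m) 4
  rw [h4] at h
  obtain ⟨t, ht⟩ : ∃ t, 3 ^ m = 4 * t + 3 := ⟨3 ^ m / 4, h.symm⟩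
  rw [ht]
  have : (4 * t + 3 - 1) / 2 = 2 * t + 1 := by omega
  rw [this]
  exact ⟨t, by ring⟩

private lemma modeq_pow_gcd {x m u v : ℕ} (hu0 : 0 < u) (hv0 : 0 < v)
    (hgcd : Nat.gcd u v = 1) (hu : x ^ u ≡ 1 [MOD m]) (hv : x ^ v ≡ 1 [MOD m]) :
    x ≡ 1 [MOD m] := by
  rcases eq_or_lt_of_le (show 1 ≤ v from hv0) with hv1 | hv1
  · rw [← hv1, pow_one] at hv; exact hv
  · -- 1 < v
    obtain ⟨e, -, he⟩ := Nat.exists_mul_mod_eq_one_of_coprime hgcd hv1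
    have hdm := Nat.div_add_mod (u * e) v
    rw [he] at hdm
    -- v * (u*e/v) + 1 = u * e
    set c := u * e / v with hc
    have hue : u * e = v * c + 1 := hdm.symm
    calc x = 1 ^ c * x := by rw [one_pow, one_mul]
    _ ≡ (x ^ v) ^ c * x [MOD m] := (Nat.ModEq.pow c hv.symm).mul_right x
    _ = x ^ (v * c + 1) := by rw [← pow_mul, pow_add, pow_one]
    _ = (x ^ u) ^ e := by rw [← pow_mul, hue]
    _ ≡ 1 ^ e [MOD m] := Nat.ModEq.pow e hu
    _ = 1 := one_pow e

private lemma sq_sub_one_fact : ∀ s : ℕ, 1 ≤ s → s * s - 1 = (s + 1) * (s - 1) := by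
  intro s hs
  obtain ⟨t, rfl⟩ : ∃ t, s = t + 1 := ⟨s - 1, by omega⟩
  simp only [Nat.add_sub_cancel]
  have : (t + 1) * (t + 1) = ((t + 1) + 1) * t + 1 := by ring
  omega

private lemma dvd_of_modeq_one {x m : ℕ} (hx : 1 ≤ x) (h : x ≡ 1 [MOD m]) : m ∣ x - 1 :=
  (Nat.modEq_iff_dvd' hx).mp h.symm

private lemma pow_modeq_one_of_dvd {x m t : ℕ} (hx : 1 ≤ x ^ t) (h : m ∣ x ^ t - 1) :
    x ^ t ≡ 1 [MOD m] := ((Nat.modEq_iff_dvd' hx).mpr h).symm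

private lemma dvd_eight {m n k : ℕ} (hn0 : 0 < n) (hk0 : 0 < k) (hgcd : Nat.gcd n k = 1)
    (h1 : m ∣ 3 ^ n + 1) (h2 : m ∣ 3 ^ k + 1) : m ∣ 8 := by
  have key : ∀ j : ℕ, m ∣ 3 ^ j + 1 → 9 ^ j ≡ 1 [MOD m] := by
    intro j hj
    have hdvd : m ∣ 9 ^ j - 1 := by
      refine hj.trans ⟨3 ^ j - 1, ?_⟩
      have h1j : 1 ≤ 3 ^ j := Nat.one_le_pow _ _ (by norm_num)
      have h9 : (9 : ℕ) ^ j = 3 ^ j * 3 ^ j := by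
        have : (9 : ℕ) = 3 * 3 := by norm_num
        rw [this, mul_pow]
      rw [h9, sq_sub_one_fact _ h1j]
    exact pow_modeq_one_of_dvd (Nat.one_le_pow _ _ (by norm_num)) hdvd
  have h9 : (9 : ℕ) ≡ 1 [MOD m] :=
    modeq_pow_gcd hn0 hk0 hgcd (key n h1) (key k h2)
  have := dvd_of_modeq_one (by norm_num) h9
  simpa using this

private lemma dvd_two {m n k : ℕ} (hn0 : 0 < n) (hk0 : 0 < k) (hk : Odd k)
    (hgcd : Nat.gcd n k = 1)
    (h1 : m ∣ 3 ^ n + 1) (h2 : m ∣ 3 ^ k - 1) : m ∣ 2 := by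
  have h2n : 3 ^ (2 * n) ≡ 1 [MOD m] := by
    apply pow_modeq_one_of_dvd (Nat.one_le_pow _ _ (by norm_num))
    refine h1.trans ⟨3 ^ n - 1, ?_⟩
    have h1j : 1 ≤ 3 ^ n := Nat.one_le_pow _ _ (by norm_num)
    rw [two_mul, pow_add, sq_sub_one_fact _ h1j]
  have hk1 : 3 ^ k ≡ 1 [MOD m] :=
    pow_modeq_one_of_dvd (Nat.one_le_pow _ _ (by norm_num)) h2
  have hco : Nat.gcd k (2 * n) = 1 := by
    have c2 : Nat.Coprime k 2 := Nat.coprime_two_right.mpr hk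
    have cn : Nat.Coprime k n := (Nat.coprime_comm.mp hgcd)
    exact Nat.Coprime.mul_right c2 cn
  have h3 : (3 : ℕ) ≡ 1 [MOD m] :=
    modeq_pow_gcd hk0 (by omega) hco hk1 h2n
  have := dvd_of_modeq_one (by norm_num) h3
  simpa using this
private lemma pow_eq_of_modeq_aux {M : Type*} [Monoid M] {t : M} {r : ℕ} (h1 : t ^ r = 1)
    {A B : ℕ} (h : A ≡ B [MOD r]) : t ^ A = t ^ B := by
  have key : ∀ C : ℕ, t ^ C = t ^ (C % r) := by
    intro C
    conv_lhs => rw [← Nat.div_add_mod C r]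
    rw [pow_add, pow_mul, h1, one_pow, one_mul]
  rw [key A, key B]
  exact congrArg (fun j => t ^ j) h

section NTgroup
variable {K : Type*} [DivisionRing K]

private lemma nt_four {n k : ℕ} (hn0 : 0 < n) (hk0 : 0 < k) (hk : Odd k)
    (hgcd : Nat.gcd n k = 1) {ζ : K}
    (h1 : ζ ^ (3 ^ n + 1) = 1) (h2 : ζ ^ (3 ^ k + 1) = 1) : ζ ^ 4 = 1 := by
  have hm8 : orderOf ζ ∣ 8 :=
    dvd_eight hn0 hk0 hgcd (orderOf_dvd_of_pow_eq_one h1) (orderOf_dvd_of_pow_eq_one h2)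
  have h8 : ζ ^ 8 = 1 := orderOf_dvd_iff_pow_eq_one.mp hm8
  have hmod : 3 ^ k % 8 = 3 := three_pow_mod8 hk
  have hdm := Nat.div_add_mod (3 ^ k) 8
  rw [hmod] at hdm
  set t := 3 ^ k / 8 with ht
  have hexp : 3 ^ k + 1 = 8 * t + 4 := by omega
  rw [hexp, pow_add, pow_mul, h8, one_pow, one_mul] at h2
  exact h2

private lemma nt_two {n k : ℕ} (hn0 : 0 < n) (hk0 : 0 < k) (hk : Odd k)
    (hgcd : Nat.gcd n k = 1) {ζ : K}
    (h1 : ζ ^ (3 ^ n + 1) = 1) (h2 : ζ ^ (3 ^ k) * ζ ^ (3 ^ n) = 1) : ζ ^ 2 = 1 := by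
  have h1k : 1 ≤ 3 ^ k := Nat.one_le_pow _ _ (by norm_num)
  have hsplit : ζ ^ (3 ^ k - 1) * ζ ^ (3 ^ n + 1) = 1 := by
    rw [← pow_add] at h2 ⊢
    rw [show 3 ^ k - 1 + (3 ^ n + 1) = 3 ^ k + 3 ^ n by omega]
    exact h2
  rw [h1, mul_one] at hsplit
  have hm2 : orderOf ζ ∣ 2 :=
    dvd_two hn0 hk0 hk hgcd (orderOf_dvd_of_pow_eq_one h1) (orderOf_dvd_of_pow_eq_one hsplit)
  exact orderOf_dvd_iff_pow_eq_one.mp hm2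

private lemma sq_eq_one_cases {ζ : K} (h : ζ ^ 2 = 1) : ζ = 1 ∨ ζ = -1 := by
  have h' : ζ * ζ = 1 := by rw [← pow_two]; exact h
  exact mul_self_eq_one_iff.mp h'

end NTgroup
section Kpack
variable {F K : Type*} [Field F] [Field K] [CharP K 3] (ι : F →+* K) (i : K)

private lemma addpow3 (m : ℕ) (u v : K) : (u + v) ^ (3 ^ m) = u ^ (3 ^ m) + v ^ (3 ^ m) := by
  haveI : Fact (Nat.Prime 3) := ⟨by norm_num⟩
  induction m with
  | zero => simp
  | succ m ih =>
      rw [pow_succ, pow_mul, pow_mul, pow_mul, ih, add_pow_char]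

private lemma two_ne_zero'' : (2 : K) ≠ 0 := by
  intro h
  have := (CharP.cast_eq_zero_iff K 3 2).mp h
  norm_num at this

private lemma ipow3odd {m : ℕ} (hm : Odd m) (hi2 : i ^ 2 = -1) : i ^ (3 ^ m) = -i := by
  have hmod : 3 ^ m % 4 = 3 := three_pow_mod4 hm
  have hdm := Nat.div_add_mod (3 ^ m) 4
  rw [hmod] at hdm
  set t := 3 ^ m / 4 with ht
  have h4 : i ^ 4 = 1 := by
    have : i ^ 4 = (i ^ 2) ^ 2 := by ring
    rw [this, hi2]; ring
  have h3 : i ^ 3 = -i := by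
    have : i ^ 3 = i ^ 2 * i := by ring
    rw [this, hi2]; ring
  calc i ^ (3 ^ m) = i ^ (4 * t + 3) := by rw [hdm]
  _ = (i ^ 4) ^ t * i ^ 3 := by rw [pow_add, pow_mul]
  _ = -i := by rw [h4, h3, one_pow, one_mul]

private lemma frob_pow {m : ℕ} (hm : Odd m) (hi2 : i ^ 2 = -1) (e g : F) :
    (ι e + i * ι g) ^ (3 ^ m) = ι (e ^ (3 ^ m)) - i * ι (g ^ (3 ^ m)) := by
  rw [addpow3, mul_pow, ipow3odd i hm hi2, ← map_pow, ← map_pow]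
  ring

private lemma c1 {n : ℕ} (hn : Odd n) (hi2 : i ^ 2 = -1)
    (hfix : ∀ t : F, t ^ (3 ^ n) = t) (e g : F) :
    (ι e + i * ι g) ^ (3 ^ n + 1) = ι (e ^ 2 + g ^ 2) := by
  rw [pow_succ, frob_pow ι i hn hi2, hfix, hfix, map_add, map_pow, map_pow]
  linear_combination (-(ι g ^ 2)) * hi2

private lemma c2 {kk : ℕ} (hk : Odd kk) (hi2 : i ^ 2 = -1) (e g : F) :
    (ι e + i * ι g) ^ (3 ^ kk + 1) =
      (ι (e ^ (3 ^ kk)) * ι e + ι (g ^ (3 ^ kk)) * ι g) +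
        i * (ι (e ^ (3 ^ kk)) * ι g - ι (g ^ (3 ^ kk)) * ι e) := by
  rw [pow_succ, frob_pow ι i hk hi2]
  linear_combination (-(ι (g ^ (3^kk)) * ι g)) * hi2

private lemma c3 {n kk : ℕ} (hn : Odd n) (hk : Odd kk) (hi2 : i ^ 2 = -1)
    (hfix : ∀ t : F, t ^ (3 ^ n) = t) (e g : F) :
    (ι e + i * ι g) ^ (3 ^ kk) * (ι e + i * ι g) ^ (3 ^ n) =
      (ι (e ^ (3 ^ kk)) * ι e - ι (g ^ (3 ^ kk)) * ι g) -
        i * (ι (e ^ (3 ^ kk)) * ι g + ι (g ^ (3 ^ kk)) * ι e) := by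
  rw [frob_pow ι i hk hi2, frob_pow ι i hn hi2, hfix, hfix]
  linear_combination (ι (g ^ (3^kk)) * ι g - i * 0) * hi2

private lemma qroot (hi2 : i ^ 2 = -1) (P Q r : K) (hr : r = P + i * Q) :
    r ^ 2 - 2 * P * r + (P ^ 2 + Q ^ 2) = 0 := by
  rw [hr]
  linear_combination (Q ^ 2) * hi2

private lemma vieta (P B r r' : K) (h : r ^ 2 - 2 * P * r + B = 0)
    (h' : r' ^ 2 - 2 * P * r' + B = 0) : r' = r ∨ r' = 2 * P - r := by
  have hfac : (r' - r) * (r' + r - 2 * P) = 0 := by linear_combination h' - h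
  rcases mul_eq_zero.mp hfac with h0 | h0
  · left; linear_combination h0
  · right; linear_combination h0

private lemma double_root (c r : K) (h : r ^ 2 - 2 * c * r + c ^ 2 = 0) : r = c := by
  have hfac : (r - c) ^ 2 = 0 := by linear_combination h
  have := pow_eq_zero_iff (n := 2) (by norm_num) |>.mp hfac
  linear_combination this

end Kpack
section Kpack2
variable {F K : Type*} [Field F] [Field K] (ι : F →+* K) (i : K)

private lemma restore {z z' : K} (hz : z ≠ 0) : z' * z⁻¹ * z = z' := by
  field_simp

private lemma quartet {n k : ℕ} (hn0 : 0 < n) (hk0 : 0 < k) (hk : Odd k)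
    (hgcd : Nat.gcd n k = 1) (hi2 : i ^ 2 = -1) {z z' : K} (hz : z ≠ 0)
    (h1 : z' ^ (3 ^ n + 1) = z ^ (3 ^ n + 1)) (h2 : z' ^ (3 ^ k + 1) = z ^ (3 ^ k + 1)) :
    z' = z ∨ z' = -z ∨ z' = i * z ∨ z' = -(i * z) := by
  set ζ := z' * z⁻¹ with hζ
  have hpow : ∀ N : ℕ, z' ^ N = z ^ N → ζ ^ N = 1 := by
    intro N hN
    rw [hζ, mul_pow, inv_pow, hN, mul_inv_cancel₀ (pow_ne_zero _ hz)]
  have h4 : ζ ^ 4 = 1 := nt_four hn0 hk0 hk hgcd (hpow _ h1) (hpow _ h2)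
  have hsq : (ζ ^ 2) ^ 2 = 1 := by rw [← pow_mul]; exact h4
  have hz' : z' = ζ * z := (restore hz).symm
  rcases sq_eq_one_cases hsq with hc | hc
  · rcases sq_eq_one_cases hc with h | h
    · left; rw [hz', h, one_mul]
    · right; left; rw [hz', h]; ring
  · have hfac : (ζ - i) * (ζ + i) = 0 := by linear_combination hc - hi2
    rcases mul_eq_zero.mp hfac with h | h
    · right; right; left
      have : ζ = i := by linear_combination h
      rw [hz', this]
    · right; right; right
      have : ζ = -i := by linear_combination h
      rw [hz', this]; ring

private lemma pairlem {n k : ℕ} (hn0 : 0 < n) (hk0 : 0 < k) (hk : Odd k)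
    (hgcd : Nat.gcd n k = 1) {z z' : K} (hz : z ≠ 0)
    (h1 : z' ^ (3 ^ n + 1) = z ^ (3 ^ n + 1))
    (h2 : z' ^ (3 ^ k) * z' ^ (3 ^ n) = z ^ (3 ^ k) * z ^ (3 ^ n)) :
    z' = z ∨ z' = -z := by
  set ζ := z' * z⁻¹ with hζ
  have hpow : ∀ N : ℕ, z' ^ N = z ^ N → ζ ^ N = 1 := by
    intro N hN
    rw [hζ, mul_pow, inv_pow, hN, mul_inv_cancel₀ (pow_ne_zero _ hz)]
  have h1' : ζ ^ (3 ^ n + 1) = 1 := hpow _ h1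
  have h2' : ζ ^ (3 ^ k) * ζ ^ (3 ^ n) = 1 := by
    rw [hζ, mul_pow, mul_pow, inv_pow, inv_pow]
    have hzz : z ^ (3^k) * z ^ (3^n) ≠ 0 :=
      mul_ne_zero (pow_ne_zero _ hz) (pow_ne_zero _ hz)
    field_simp
    linear_combination h2
  have hsq : ζ ^ 2 = 1 := nt_two hn0 hk0 hk hgcd h1' h2'
  have hz' : z' = ζ * z := (restore hz).symm
  rcases sq_eq_one_cases hsq with h | h
  · left; rw [hz', h, one_mul]
  · right; rw [hz', h]; ring

private lemma rep (hiF : ∀ t : F, i ≠ ι t) {e g e' g' : F}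
    (h : ι e + i * ι g = ι e' + i * ι g') : e = e' ∧ g = g' := by
  by_cases hgg : g = g'
  · subst hgg
    have he : ι e = ι e' := by
      have := h
      field_simp at this
      exact add_right_cancel this
    exact ⟨ι.injective he, rfl⟩
  · exfalso
    have hne : ι g - ι g' ≠ 0 := by
      intro h0
      exact hgg (ι.injective (by linear_combination h0))
    have : i = (ι e' - ι e) / (ι g - ι g') := by
      field_simp
      linear_combination h
    rw [← map_sub, ← map_sub, ← map_div₀] at this
    exact hiF _ this

private lemma quartet_distinct [CharP K 3] (hi2 : i ^ 2 = -1) {u : K} (hu : u ≠ 0) :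
    u ≠ -u ∧ u ≠ i * u ∧ u ≠ -(i * u) ∧ (-u) ≠ i * u ∧ (-u) ≠ -(i * u) ∧ i * u ≠ -(i * u) := by
  have h2 : (2 : K) ≠ 0 := two_ne_zero''
  have hi0 : i ≠ 0 := by
    intro h; rw [h] at hi2; norm_num at hi2
  have hi1 : i ≠ 1 := by
    intro h; rw [h] at hi2; norm_num at hi2
    exact h2 (by linear_combination hi2)
  have him1 : i ≠ -1 := by
    intro h; rw [h] at hi2; norm_num at hi2
    exact h2 (by linear_combination hi2)
  have key : ∀ c : K, c ≠ 0 → c * u ≠ 0 := fun c hc => mul_ne_zero hc hu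
  refine ⟨?_, ?_, ?_, ?_, ?_, ?_⟩
  · intro h
    exact key 2 h2 (by linear_combination h)
  · intro h
    refine key (i - 1) (fun hc => hi1 (by linear_combination hc)) ?_
    linear_combination -h
  · intro h
    refine key (i + 1) (fun hc => him1 (by linear_combination hc)) ?_
    linear_combination h
  · intro h
    refine key (i + 1) (fun hc => him1 (by linear_combination hc)) ?_
    linear_combination -h
  · intro h
    refine key (i - 1) (fun hc => hi1 (by linear_combination hc)) ?_
    linear_combination h
  · intro h
    refine key (2 * i) (mul_ne_zero h2 hi0) ?_
    linear_combination h

end Kpack2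
section Core
variable {F K : Type*} [Field F] [Field K] [CharP F 3] [CharP K 3]

private lemma Bfact {kk : ℕ} (e g : F) :
    (e ^ 2 + g ^ 2) ^ (3 ^ kk + 1) =
        (e ^ (3 ^ kk + 1) + g ^ (3 ^ kk + 1)) ^ 2 + (e ^ (3 ^ kk) * g - g ^ (3 ^ kk) * e) ^ 2 ∧
      (e ^ 2 + g ^ 2) ^ (3 ^ kk + 1) =
        (e ^ (3 ^ kk + 1) - g ^ (3 ^ kk + 1)) ^ 2 + (e ^ (3 ^ kk) * g + g ^ (3 ^ kk) * e) ^ 2 := by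
  have h1 : (e ^ 2 + g ^ 2) ^ (3 ^ kk + 1) =
      ((e ^ 2) ^ (3 ^ kk) + (g ^ 2) ^ (3 ^ kk)) * (e ^ 2 + g ^ 2) := by
    rw [pow_succ, addpow3]
  rw [h1]
  constructor <;> ring

private lemma lift_conditions (ι : F →+* K) (i : K) {n k : ℕ} (hn : Odd n) (hk : Odd k)
    (hi2 : i ^ 2 = -1) (hfix : ∀ t : F, t ^ (3 ^ n) = t) {e g b : F} (hb : e ^ 2 + g ^ 2 = b) :
    (ι e + i * ι g) ^ (3 ^ n + 1) = ι b
    ∧ (ι e + i * ι g) ^ (3 ^ k + 1) =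
        ι (e ^ (3 ^ k + 1) + g ^ (3 ^ k + 1)) + i * ι (e ^ (3 ^ k) * g - g ^ (3 ^ k) * e)
    ∧ ((ι e + i * ι g) ^ (3 ^ k + 1)) ^ 2
        - 2 * ι (e ^ (3 ^ k + 1) + g ^ (3 ^ k + 1)) * ((ι e + i * ι g) ^ (3 ^ k + 1))
        + ι (b ^ (3 ^ k + 1)) = 0
    ∧ ((ι e + i * ι g) ^ (3 ^ k) * (ι e + i * ι g) ^ (3 ^ n)) ^ 2
        - 2 * ι (e ^ (3 ^ k + 1) - g ^ (3 ^ k + 1))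
            * ((ι e + i * ι g) ^ (3 ^ k) * (ι e + i * ι g) ^ (3 ^ n))
        + ι (b ^ (3 ^ k + 1)) = 0
    ∧ (ι e + i * ι g) ^ (3 ^ k) * (ι e + i * ι g) ^ (3 ^ n) =
        ι (e ^ (3 ^ k + 1) - g ^ (3 ^ k + 1)) - i * ι (e ^ (3 ^ k) * g + g ^ (3 ^ k) * e) := by
  have hpack : ∀ u : F, ι (u ^ (3 ^ k)) * ι u = ι (u ^ (3 ^ k + 1)) := by
    intro u; rw [← map_mul, ← pow_succ]
  have h2 : (ι e + i * ι g) ^ (3 ^ k + 1) =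
      ι (e ^ (3 ^ k + 1) + g ^ (3 ^ k + 1)) + i * ι (e ^ (3 ^ k) * g - g ^ (3 ^ k) * e) := by
    rw [c2 ι i hk hi2, map_add, map_sub, map_mul, map_mul, hpack e, hpack g]
  have h3 : (ι e + i * ι g) ^ (3 ^ k) * (ι e + i * ι g) ^ (3 ^ n) =
      ι (e ^ (3 ^ k + 1) - g ^ (3 ^ k + 1)) - i * ι (e ^ (3 ^ k) * g + g ^ (3 ^ k) * e) := by
    rw [c3 ι i hn hk hi2 hfix, map_sub, map_add, map_mul, map_mul, hpack e, hpack g]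
  have hB := Bfact (kk := k) e g
  rw [hb] at hB
  refine ⟨?_, h2, ?_, ?_, h3⟩
  · rw [c1 ι i hn hi2 hfix, hb]
  · have hBmap : ι (b ^ (3 ^ k + 1)) = ι (e ^ (3 ^ k + 1) + g ^ (3 ^ k + 1)) ^ 2
        + ι (e ^ (3 ^ k) * g - g ^ (3 ^ k) * e) ^ 2 := by
      rw [← map_pow, ← map_pow, ← map_add, hB.1]
    rw [hBmap]
    exact qroot i hi2 _ _ _ h2
  · have h3' : (ι e + i * ι g) ^ (3 ^ k) * (ι e + i * ι g) ^ (3 ^ n) =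
        ι (e ^ (3 ^ k + 1) - g ^ (3 ^ k + 1)) + i * ι (-(e ^ (3 ^ k) * g + g ^ (3 ^ k) * e)) := by
      rw [h3, map_neg]; ring
    have hBmap2 : ι (b ^ (3 ^ k + 1)) = ι (e ^ (3 ^ k + 1) - g ^ (3 ^ k + 1)) ^ 2
        + ι (-(e ^ (3 ^ k) * g + g ^ (3 ^ k) * e)) ^ 2 := by
      rw [← map_pow, ← map_pow, ← map_add]
      congr 1
      rw [hB.2]
      ring
    rw [hBmap2]
    exact qroot i hi2 _ _ _ h3'

end Core
universe uF in
open Polynomial in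
private lemma exists_K {F : Type uF} [Field F] [CharP F 3] (hnosq : ∀ t : F, t ^ 2 ≠ -1) :
    ∃ (K : Type uF) (_fieldK : Field K) (ι : F →+* K) (i : K),
      CharP K 3 ∧ i ^ 2 = -1 ∧ ∀ t : F, i ≠ ι t := by
  have hpoleq : (X : F[X]) ^ 2 - C (-1 : F) = X ^ 2 + 1 := by
    rw [map_neg, map_one, sub_neg_eq_add]
  have hirr : Irreducible ((X : F[X]) ^ 2 + 1) := by
    rw [← hpoleq]
    exact X_pow_sub_C_irreducible_of_prime Nat.prime_two (fun t => hnosq t)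
  haveI hfact : Fact (Irreducible ((X : F[X]) ^ 2 + 1)) := ⟨hirr⟩
  have h0 := AdjoinRoot.eval₂_root ((X : F[X]) ^ 2 + 1)
  simp only [eval₂_add, eval₂_pow, eval₂_X, eval₂_one] at h0
  have hi2 : (AdjoinRoot.root ((X : F[X]) ^ 2 + 1)) ^ 2 = -1 :=
    eq_neg_of_add_eq_zero_left h0
  refine ⟨AdjoinRoot ((X : F[X]) ^ 2 + 1), inferInstance,
    AdjoinRoot.of ((X : F[X]) ^ 2 + 1),
    AdjoinRoot.root ((X : F[X]) ^ 2 + 1), ?_, hi2, ?_⟩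
  · exact charP_of_injective_ringHom (AdjoinRoot.of _).injective 3
  · intro t ht
    apply hnosq t
    apply (AdjoinRoot.of ((X : F[X]) ^ 2 + 1)).injective
    rw [map_pow, map_neg, map_one, ← ht]
    exact hi2
section Helpers
variable {α : Type*}

private lemma ncard_le_one_of (C : Set α) (h : ∀ x ∈ C, ∀ y ∈ C, x = y) : C.ncard ≤ 1 := by
  rcases C.eq_empty_or_nonempty with rfl | ⟨x0, hx0⟩
  · simp
  · have hsub : C ⊆ {x0} := fun y hy => by
      rw [Set.mem_singleton_iff]; exact h y hy x0 hx0
    calc C.ncard ≤ ({x0} : Set α).ncard := Set.ncard_le_ncard hsub (Set.finite_singleton x0)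
    _ = 1 := Set.ncard_singleton x0

private lemma ncard_le_two_of (C : Set α)
    (h : ∀ x ∈ C, ∀ y ∈ C, ∀ z ∈ C, x ≠ y → x ≠ z → y ≠ z → False) : C.ncard ≤ 2 := by
  by_cases hex : ∃ x ∈ C, ∃ y ∈ C, x ≠ y
  · obtain ⟨x, hx, y, hy, hxy⟩ := hex
    have hsub : C ⊆ {x, y} := by
      intro z hz
      by_cases hzx : z = x
      · exact Or.inl hzx
      by_cases hzy : z = y
      · exact Or.inr hzy
      · exact absurd (h x hx y hy z hz hxy (fun hh => hzx hh.symm) (fun hh => hzy hh.symm)) id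
    calc C.ncard ≤ ({x, y} : Set α).ncard :=
          Set.ncard_le_ncard hsub (Set.toFinite _)
    _ ≤ ({y} : Set α).ncard + 1 := Set.ncard_insert_le x {y}
    _ ≤ 2 := by rw [Set.ncard_singleton]
  · push_neg at hex
    have h1 := ncard_le_one_of C hex
    omega

private lemma quad_finset_card [DecidableEq α] {z1 z2 z3 z4 : α}
    (h12 : z1 ≠ z2) (h13 : z1 ≠ z3) (h14 : z1 ≠ z4)
    (h23 : z2 ≠ z3) (h24 : z2 ≠ z4) (h34 : z3 ≠ z4) :
    ({z1, z2, z3, z4} : Finset α).card = 4 := by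
  rw [Finset.card_insert_of_notMem (by simp [h12, h13, h14]),
    Finset.card_insert_of_notMem (by simp [h23, h24]),
    Finset.card_insert_of_notMem (by simp [h34]), Finset.card_singleton]

private lemma card_le_four [DecidableEq α] (z1 z2 z3 z4 : α) :
    ({z1, z2, z3, z4} : Finset α).card ≤ 4 := by
  calc ({z1, z2, z3, z4} : Finset α).card ≤ ({z2, z3, z4} : Finset α).card + 1 :=
        Finset.card_insert_le _ _
  _ ≤ (({z3, z4} : Finset α).card + 1) + 1 :=
        Nat.add_le_add_right (Finset.card_insert_le _ _) 1
  _ ≤ ((({z4} : Finset α).card + 1) + 1) + 1 :=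
        Nat.add_le_add_right (Nat.add_le_add_right (Finset.card_insert_le _ _) 1) 1
  _ ≤ 4 := by rw [Finset.card_singleton]

end Helpers
private def ClsSet {F : Type*} [Field F] (n d : ℕ) (a b ε1 ε2 : F) : Set F :=
  {x | (x + a) ^ d + x ^ d = b ∧ x ≠ 0 ∧ x + a ≠ 0 ∧
    (x + a) ^ ((3 ^ n - 1) / 2) = ε1 ∧ x ^ ((3 ^ n - 1) / 2) = ε2}

private lemma mem_ClsSet {F : Type*} [Field F] {n d : ℕ} {a b ε1 ε2 x : F} :
    x ∈ ClsSet n d a b ε1 ε2 ↔ ((x + a) ^ d + x ^ d = b ∧ x ≠ 0 ∧ x + a ≠ 0 ∧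
      (x + a) ^ ((3 ^ n - 1) / 2) = ε1 ∧ x ^ ((3 ^ n - 1) / 2) = ε2) := Iff.rfl
set_option maxHeartbeats 2000000 in
open Polynomial in
theorem stmt_1 (n k d : ℕ) (hn0 : 0 < n) (hk0 : 0 < k) (hd0 : 0 < d)
    (hn : Odd n) (hk : Odd k) (hd : Even d) (hgcd : Nat.gcd n k = 1)
    (hcong : ((3 ^ k + 1) / 2) * d ≡ (3 ^ n + 1) / 2 [MOD 3 ^ n - 1])
    (F : Type*) [Field F] [Fintype F] (hcard : Fintype.card F = 3 ^ n)
    (a b : F) :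
    {x : F | (x + a) ^ d + x ^ d = b}.ncard ≤ 6 := by
  classical
  -- numeric facts
  have hmod4k := three_pow_mod4 hk
  have hmod4n := three_pow_mod4 hn
  have h2d : 2 ∣ d := hd.two_dvd
  have hk1 : 1 ≤ (3:ℕ) ^ k := Nat.one_le_pow _ _ (by norm_num)
  have hn1 : 1 ≤ (3:ℕ) ^ n := Nat.one_le_pow _ _ (by norm_num)
  obtain ⟨mm, hmm⟩ : ∃ mm, 3 ^ k + 1 = 2 * mm := ⟨(3 ^ k + 1) / 2, by omega⟩
  obtain ⟨d', hd'⟩ := h2d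
  have hsd : d / 2 * (3 ^ k + 1) = (3 ^ k + 1) / 2 * d := by
    rw [hmm, hd', show 2 * d' / 2 = d' by omega, show 2 * mm / 2 = mm by omega]
    ring
  -- characteristic of F is 3
  obtain ⟨p, hpinst⟩ := CharP.exists F
  haveI := hpinst
  obtain ⟨m, hp, hc'⟩ := FiniteField.card F p
  have hp3 : p = 3 := by
    have hdvd : p ∣ 3 ^ n := by
      rw [← hcard, hc']
      exact dvd_pow_self p (by exact_mod_cast m.ne_zero)
    exact (Nat.prime_dvd_prime_iff_eq hp (by norm_num)).mp (hp.dvd_of_dvd_pow hdvd)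
  subst hp3
  have hch2F : (2 : F) ≠ 0 := two_ne_zero''
  -- power facts in F
  have hFfix : ∀ t : F, t ^ (3 ^ n) = t := by
    intro t; rw [← hcard]; exact FiniteField.pow_card t
  have hFu : ∀ t : F, t ≠ 0 → t ^ (3 ^ n - 1) = 1 := by
    intro t ht; rw [← hcard]; exact FiniteField.pow_card_sub_one_eq_one t ht
  have hPOW : ∀ t : F, t ≠ 0 → ∀ A B : ℕ, A ≡ B [MOD 3 ^ n - 1] → t ^ A = t ^ B := by
    intro t ht A B hAB
    exact pow_eq_of_modeq_aux (hFu t ht) hAB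
  have hcong2 : (3 ^ k + 1) * d ≡ 2 [MOD 3 ^ n - 1] := by
    have hmul := hcong.mul_left 2
    have e1 : 2 * ((3 ^ k + 1) / 2 * d) = (3 ^ k + 1) * d := by
      rw [hmm, show 2 * mm / 2 = mm by omega]; ring
    have e2 : 2 * ((3 ^ n + 1) / 2) = 3 ^ n + 1 := by omega
    rw [e1, e2] at hmul
    have h2' : (3 ^ n + 1) ≡ 2 [MOD 3 ^ n - 1] := by
      show (3 ^ n + 1) % (3 ^ n - 1) = 2 % (3 ^ n - 1)
      rw [show 3 ^ n + 1 = (3 ^ n - 1) + 2 by omega, Nat.add_mod_left]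
    exact hmul.trans h2'
  have hεval : ∀ x : F, x ≠ 0 → x ^ ((3 ^ n - 1) / 2) = 1 ∨ x ^ ((3 ^ n - 1) / 2) = -1 := by
    intro x hx
    apply sq_eq_one_cases
    rw [← pow_mul, show (3 ^ n - 1) / 2 * 2 = 3 ^ n - 1 by omega]
    exact hFu x hx
  have hKEY : ∀ x : F, x ≠ 0 →
      (x ^ (d / 2)) ^ (3 ^ k + 1) = x ^ ((3 ^ n - 1) / 2) * x := by
    intro x hx
    rw [← pow_mul, hsd, hPOW x hx _ _ hcong]
    rw [show (3 ^ n + 1) / 2 = (3 ^ n - 1) / 2 + 1 by omega, pow_succ]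
  have hKEY2 : ∀ x : F, x ≠ 0 → (x ^ d) ^ (3 ^ k + 1) = x ^ 2 := by
    intro x hx
    rw [← pow_mul, mul_comm d]
    exact hPOW x hx _ _ hcong2
  -- -1 is not a square in F
  have hnosq : ∀ t : F, t ^ 2 ≠ -1 := by
    intro t ht
    have ht0 : t ≠ 0 := by
      rintro rfl
      rw [zero_pow (by norm_num : (2:ℕ) ≠ 0)] at ht
      exact one_ne_zero (neg_eq_zero.mp ht.symm)
    have h1 : (t ^ 2) ^ ((3 ^ n - 1) / 2) = t ^ (3 ^ n - 1) := by
      rw [← pow_mul]; congr 1; omega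
    rw [ht, hFu t ht0, (halves_odd hn).neg_one_pow] at h1
    exact hch2F (by linear_combination - h1)
  -- the quadratic extension K = F(i)
  obtain ⟨K, _fieldK, ι, i, charK, hi2, hiF⟩ := exists_K hnosq
  haveI := charK
  have hrep : ∀ e g e' g' : F, ι e + i * ι g = ι e' + i * ι g' → e = e' ∧ g = g' :=
    fun e g e' g' h => rep ι i hiF h
  haveI : DecidableEq K := Classical.decEq K
  -- fibers of the d-th power map have size at most 2
  have hfib : ∀ x y : F, x ^ d = y ^ d → y = x ∨ y = -x := by
    intro x y hxy
    by_cases hx : x = 0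
    · subst hx
      left
      rw [zero_pow hd0.ne'] at hxy
      exact pow_eq_zero_iff hd0.ne' |>.mp hxy.symm
    · have hy : y ≠ 0 := by
        rintro rfl
        rw [zero_pow hd0.ne'] at hxy
        exact hx (pow_eq_zero_iff hd0.ne' |>.mp hxy)
      have hζd : (y * x⁻¹) ^ d = 1 := by
        rw [mul_pow, inv_pow, ← hxy, mul_inv_cancel₀ (pow_ne_zero _ hx)]
      have hζq : (y * x⁻¹) ^ (3 ^ n - 1) = 1 :=
        hFu _ (mul_ne_zero hy (inv_ne_zero hx))
      have hord2 : orderOf (y * x⁻¹) ∣ 2 := by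
        have h1 : orderOf (y * x⁻¹) ∣ (3 ^ k + 1) * d :=
          Dvd.dvd.mul_left (orderOf_dvd_of_pow_eq_one hζd) _
        have hge : 2 ≤ (3 ^ k + 1) * d := by
          calc (2 : ℕ) = 2 * 1 := by norm_num
          _ ≤ (3 ^ k + 1) * d := Nat.mul_le_mul (by omega) hd0
        have h2 : (3 ^ n - 1) ∣ (3 ^ k + 1) * d - 2 :=
          (Nat.modEq_iff_dvd' hge).mp hcong2.symm
        have h3 : orderOf (y * x⁻¹) ∣ (3 ^ k + 1) * d - 2 :=
          dvd_trans (orderOf_dvd_of_pow_eq_one hζq) h2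
        have h4 := Nat.dvd_sub h1 h3
        rwa [show (3 ^ k + 1) * d - ((3 ^ k + 1) * d - 2) = 2 by omega] at h4
      have hζ2 : (y * x⁻¹) ^ 2 = 1 := orderOf_dvd_iff_pow_eq_one.mp hord2
      have hrestore : y * x⁻¹ * x = y := by field_simp
      rcases sq_eq_one_cases hζ2 with h | h
      · left; rw [← hrestore, h, one_mul]
      · right; rw [← hrestore, h]; ring
  by_cases ha : a = 0
  · -- a = 0 : at most 2 solutions
    subst ha
    have hset : {x : F | (x + 0) ^ d + x ^ d = b} = {x : F | x ^ d + x ^ d = b} := by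
      ext x; simp
    rw [hset]
    refine le_trans (ncard_le_two_of _ ?_) (by norm_num)
    intro x hx y hy z hz hxy hxz hyz
    simp only [Set.mem_setOf_eq] at hx hy hz
    have hkey : ∀ u v : F, u ^ d + u ^ d = b → v ^ d + v ^ d = b → v = u ∨ v = -u := by
      intro u v hu hv
      apply hfib
      have h2 : (2 : F) * u ^ d = 2 * v ^ d := by linear_combination hu - hv
      exact mul_left_cancel₀ hch2F h2
    rcases hkey x y hx hy with h | h
    · exact hxy h.symm
    · rcases hkey x z hx hz with h' | h'
      · exact hxz h'.symm
      · exact hyz (h.trans h'.symm)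
  -- main case : a ≠ 0
  have hoddk3 : Odd ((3:ℕ) ^ k) := Odd.pow (⟨1, by norm_num⟩ : Odd 3)
  have hevenM : Even (3 ^ k + 1) := hoddk3.add_one
  have hMne : (3:ℕ) ^ k + 1 ≠ 0 := by positivity
  have hnegpowM : ∀ u : F, (-u) ^ (3 ^ k + 1) = u ^ (3 ^ k + 1) := fun u => hevenM.neg_pow u
  have hnegpowk : ∀ u : F, (-u) ^ (3 ^ k) = -(u ^ (3 ^ k)) := fun u => hoddk3.neg_pow u
  have hEsq : ∀ x : F, (x ^ (d / 2)) ^ 2 = x ^ d := by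
    intro x; rw [← pow_mul]; congr 1; omega
  have hdata : ∀ ε1 ε2 x : F, x ∈ ClsSet n d a b ε1 ε2 →
      x ^ (d / 2) ≠ 0 ∧ (x + a) ^ (d / 2) ≠ 0 ∧
      (x ^ (d / 2)) ^ 2 + ((x + a) ^ (d / 2)) ^ 2 = b ∧
      (x ^ (d / 2)) ^ (3 ^ k + 1) = ε2 * x ∧
      ((x + a) ^ (d / 2)) ^ (3 ^ k + 1) = ε1 * (x + a) := by
    rintro ε1 ε2 x ⟨hsol, hx0, hxa0, hη1, hη2⟩
    refine ⟨pow_ne_zero _ hx0, pow_ne_zero _ hxa0, ?_, ?_, ?_⟩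
    · rw [hEsq, hEsq]; linear_combination hsol
    · rw [hKEY x hx0, hη2]
    · rw [hKEY _ hxa0, hη1]
  have hlift_ne : ∀ e g : F, e ≠ 0 → ι e + i * ι g ≠ 0 := by
    intro e g he h0
    have h1 : ι e + i * ι g = ι 0 + i * ι 0 := by
      rw [h0, map_zero]; ring
    exact he (hrep _ _ _ _ h1).1
  have hQM : ∀ P : F, ∀ s t : F, s ^ 2 + t ^ 2 = b → s ^ (3 ^ k + 1) + t ^ (3 ^ k + 1) = P →
      ((ι s + i * ι t) ^ (3 ^ n + 1) = ι b ∧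
        ((ι s + i * ι t) ^ (3 ^ k + 1)) ^ 2
          - 2 * ι P * ((ι s + i * ι t) ^ (3 ^ k + 1)) + ι (b ^ (3 ^ k + 1)) = 0) := by
    intro P s t hst hP
    obtain ⟨hc1, hc2, hc3, _, _⟩ := lift_conditions ι i hn hk hi2 hFfix hst
    refine ⟨hc1, ?_⟩
    rw [← hP]
    exact hc3
  have hQW : ∀ P : F, ∀ s t : F, s ^ 2 + t ^ 2 = b → s ^ (3 ^ k + 1) - t ^ (3 ^ k + 1) = P →
      ((ι s + i * ι t) ^ (3 ^ n + 1) = ι b ∧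
        ((ι s + i * ι t) ^ (3 ^ k) * (ι s + i * ι t) ^ (3 ^ n)) ^ 2
          - 2 * ι P * ((ι s + i * ι t) ^ (3 ^ k) * (ι s + i * ι t) ^ (3 ^ n))
          + ι (b ^ (3 ^ k + 1)) = 0) := by
    intro P s t hst hP
    obtain ⟨hc1, _, _, hc4, _⟩ := lift_conditions ι i hn hk hi2 hFfix hst
    refine ⟨hc1, ?_⟩
    rw [← hP]
    exact hc4
  -- pure classes have at most one element
  have hpure : ∀ ε : F, ∀ x ∈ ClsSet n d a b ε ε, ∀ x' ∈ ClsSet n d a b ε ε, x = x' := by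
    intro ε x hx x' hx'
    obtain ⟨he0, hg0, hbx, hep, hgp⟩ := hdata ε ε x hx
    obtain ⟨he0', hg0', hbx', hep', hgp'⟩ := hdata ε ε x' hx'
    have hεne : ε ≠ 0 := by
      rintro rfl
      apply he0
      have h0 : (x ^ (d / 2)) ^ (3 ^ k + 1) = 0 := by rw [hep]; ring
      exact pow_eq_zero_iff hMne |>.mp h0
    have hco : (x ^ (d / 2)) ^ (3 ^ k + 1) - ((x + a) ^ (d / 2)) ^ (3 ^ k + 1) = -(ε * a) := by
      rw [hep, hgp]; ring
    have hco' : (x' ^ (d / 2)) ^ (3 ^ k + 1) - ((x' + a) ^ (d / 2)) ^ (3 ^ k + 1) = -(ε * a) := by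
      rw [hep', hgp']; ring
    have hbc : (x ^ (d / 2)) ^ 2 + (-((x + a) ^ (d / 2))) ^ 2 = b := by
      rw [neg_sq]; exact hbx
    have hcoc : (x ^ (d / 2)) ^ (3 ^ k + 1) - (-((x + a) ^ (d / 2))) ^ (3 ^ k + 1) = -(ε * a) := by
      rw [hnegpowM]; exact hco
    obtain ⟨hzn', hzq'⟩ := hQW (-(ε * a)) _ _ hbx' hco'
    obtain ⟨hzn, hzq⟩ := hQW (-(ε * a)) _ _ hbx hco
    obtain ⟨hznc, hzqc⟩ := hQW (-(ε * a)) _ _ hbc hcoc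
    obtain ⟨_, _, _, _, hw5⟩ := lift_conditions ι i hn hk hi2 hFfix hbx
    obtain ⟨_, _, _, _, hw5c⟩ := lift_conditions ι i hn hk hi2 hFfix hbc
    set e := x ^ (d / 2) with he_def
    set g := (x + a) ^ (d / 2) with hg_def
    set e' := x' ^ (d / 2) with he'_def
    set g' := (x' + a) ^ (d / 2) with hg'_def
    set z : K := ι e + i * ι g with hz_def
    set zc : K := ι e + i * ι (-g) with hzc_def
    set z' : K := ι e' + i * ι g' with hz'_def
    have hsum : z ^ (3 ^ k) * z ^ (3 ^ n) + zc ^ (3 ^ k) * zc ^ (3 ^ n)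
        = 2 * ι (-(ε * a)) := by
      rw [hw5, hw5c, hnegpowM, hnegpowk,
        show e ^ (3 ^ k) * (-g) + (-(g ^ (3 ^ k))) * e = -(e ^ (3 ^ k) * g + g ^ (3 ^ k) * e)
          from by ring, map_neg, ← hco]
      ring
    have hee : e' = e ∨ e' = -e := by
      rcases vieta (ι (-(ε * a))) (ι (b ^ (3 ^ k + 1))) _ _ hzq hzq' with hv | hv
      · have hzne : z ≠ 0 := hlift_ne e g he0
        rcases pairlem hn0 hk0 hk hgcd hzne (by rw [hzn', hzn]) hv with h | h
        · exact Or.inl (hrep _ _ _ _ h).1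
        · have h2 : z' = ι (-e) + i * ι (-g) := by rw [h, hz_def, map_neg, map_neg]; ring
          exact Or.inr (hrep _ _ _ _ h2).1
      · have hv' : z' ^ (3 ^ k) * z' ^ (3 ^ n) = zc ^ (3 ^ k) * zc ^ (3 ^ n) := by
          linear_combination hv - hsum
        have hzcne : zc ≠ 0 := hlift_ne e (-g) he0
        rcases pairlem hn0 hk0 hk hgcd hzcne (by rw [hzn', hznc]) hv' with h | h
        · exact Or.inl (hrep _ _ _ _ h).1
        · have h2 : z' = ι (-e) + i * ι g := by rw [h, hzc_def, map_neg, map_neg]; ring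
          exact Or.inr (hrep _ _ _ _ h2).1
    have hMeq : e' ^ (3 ^ k + 1) = e ^ (3 ^ k + 1) := by
      rcases hee with h | h
      · rw [h]
      · rw [h, hnegpowM]
    have hfin : ε * x = ε * x' := by rw [← hep, ← hep', hMeq]
    exact mul_left_cancel₀ hεne hfin
  -- mixed classes have at most two elements
  have hmixed : ∀ ε : F, (ClsSet n d a b ε (-ε)).ncard ≤ 2 := by
    intro ε
    apply ncard_le_two_of
    intro x1 hx1 x2 hx2 x3 hx3 h12 h13 h23
    obtain ⟨he1, hg1, hb1, hep1, hgp1⟩ := hdata ε (-ε) x1 hx1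
    obtain ⟨he2, hg2, hb2, _, _⟩ := hdata ε (-ε) x2 hx2
    obtain ⟨he3, hg3, hb3, _, _⟩ := hdata ε (-ε) x3 hx3
    have hεne : ε ≠ 0 := by
      rintro rfl
      apply he1
      have h0 : (x1 ^ (d / 2)) ^ (3 ^ k + 1) = 0 := by rw [hep1]; ring
      exact pow_eq_zero_iff hMne |>.mp h0
    set L : F → Finset K := fun x =>
      {ι (x ^ (d / 2)) + i * ι ((x + a) ^ (d / 2)),
       ι (-(x ^ (d / 2))) + i * ι (-((x + a) ^ (d / 2))),
       ι (x ^ (d / 2)) + i * ι (-((x + a) ^ (d / 2))),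
       ι (-(x ^ (d / 2))) + i * ι ((x + a) ^ (d / 2))} with hLdef
    have hmemL : ∀ x : F, ∀ ω ∈ L x, ∃ s t : F,
        (s = x ^ (d / 2) ∨ s = -(x ^ (d / 2))) ∧
        (t = (x + a) ^ (d / 2) ∨ t = -((x + a) ^ (d / 2))) ∧ ω = ι s + i * ι t := by
      intro x ω hω
      rw [hLdef] at hω
      simp only [Finset.mem_insert, Finset.mem_singleton] at hω
      rcases hω with h | h | h | h
      · exact ⟨_, _, Or.inl rfl, Or.inl rfl, h⟩
      · exact ⟨_, _, Or.inr rfl, Or.inr rfl, h⟩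
      · exact ⟨_, _, Or.inl rfl, Or.inr rfl, h⟩
      · exact ⟨_, _, Or.inr rfl, Or.inl rfl, h⟩
    have hsq : ∀ u s : F, (s = u ∨ s = -u) →
        s ^ 2 = u ^ 2 ∧ s ^ (3 ^ k + 1) = u ^ (3 ^ k + 1) := by
      rintro u s (rfl | rfl)
      · exact ⟨rfl, rfl⟩
      · exact ⟨neg_sq u, hnegpowM u⟩
    have hcond : ∀ x, x ∈ ClsSet n d a b ε (-ε) → ∀ ω ∈ L x,
        ω ^ (3 ^ n + 1) = ι b ∧
        (ω ^ (3 ^ k + 1)) ^ 2 - 2 * ι (ε * a) * (ω ^ (3 ^ k + 1))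
          + ι (b ^ (3 ^ k + 1)) = 0 := by
      intro x hx ω hω
      obtain ⟨hex, hgx, hbx, hepx, hgpx⟩ := hdata ε (-ε) x hx
      obtain ⟨s, t, hs, ht, rfl⟩ := hmemL x ω hω
      have hss := hsq _ _ hs
      have htt := hsq _ _ ht
      apply hQM (ε * a) s t
      · rw [hss.1, htt.1]; exact hbx
      · rw [hss.2, htt.2, hepx, hgpx]; ring
    have hFne : ∀ u : F, u ≠ 0 → u ≠ -u := by
      intro u hu h
      have h2 : (2 : F) * u = 0 := by linear_combination h
      rcases mul_eq_zero.mp h2 with h' | h'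
      · exact hch2F h'
      · exact hu h'
    have hcard4 : ∀ x : F, x ^ (d / 2) ≠ 0 → (x + a) ^ (d / 2) ≠ 0 → (L x).card = 4 := by
      intro x he hg
      rw [hLdef]
      refine quad_finset_card ?_ ?_ ?_ ?_ ?_ ?_
      · intro hEq; exact hFne _ he (hrep _ _ _ _ hEq).1
      · intro hEq; exact hFne _ hg (hrep _ _ _ _ hEq).2
      · intro hEq; exact hFne _ he (hrep _ _ _ _ hEq).1
      · intro hEq; exact hFne _ he ((hrep _ _ _ _ hEq).1).symm
      · intro hEq; exact hFne _ hg ((hrep _ _ _ _ hEq).2).symm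
      · intro hEq; exact hFne _ he (hrep _ _ _ _ hEq).1
    have hdisj : ∀ x y : F, x ∈ ClsSet n d a b ε (-ε) → y ∈ ClsSet n d a b ε (-ε) →
        x ≠ y → Disjoint (L x) (L y) := by
      intro x y hxC hyC hxy
      rw [Finset.disjoint_left]
      intro ω hωx hωy
      obtain ⟨s, t, hs, ht, hEq1⟩ := hmemL x ω hωx
      obtain ⟨s', t', hs', ht', hEq2⟩ := hmemL y ω hωy
      obtain ⟨hse, _⟩ := hrep _ _ _ _ (hEq1.symm.trans hEq2)
      have hdx := hdata ε (-ε) x hxC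
      have hdy := hdata ε (-ε) y hyC
      have h1 : s ^ (3 ^ k + 1) = -ε * x := by rw [(hsq _ _ hs).2, hdx.2.2.2.1]
      have h2 : s' ^ (3 ^ k + 1) = -ε * y := by rw [(hsq _ _ hs').2, hdy.2.2.2.1]
      have h3 : -ε * x = -ε * y := by rw [← h1, ← h2, hse]
      exact hxy (mul_left_cancel₀ (neg_ne_zero.mpr hεne) h3)
    -- canonical lifts of x1 and the sum of their r-values
    obtain ⟨_, hr1f, _, _, _⟩ := lift_conditions ι i hn hk hi2 hFfix hb1
    have hbc1 : (x1 ^ (d / 2)) ^ 2 + (-((x1 + a) ^ (d / 2))) ^ 2 = b := by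
      rw [neg_sq]; exact hb1
    obtain ⟨_, hrc1f, _, _, _⟩ := lift_conditions ι i hn hk hi2 hFfix hbc1
    set e1 := x1 ^ (d / 2) with he1d
    set g1 := (x1 + a) ^ (d / 2) with hg1d
    set z1 : K := ι e1 + i * ι g1 with hz1d
    set zc1 : K := ι e1 + i * ι (-g1) with hzc1d
    have hPv : e1 ^ (3 ^ k + 1) + g1 ^ (3 ^ k + 1) = ε * a := by
      rw [hep1, hgp1]; ring
    have hrsum : z1 ^ (3 ^ k + 1) + zc1 ^ (3 ^ k + 1) = 2 * ι (ε * a) := by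
      rw [hr1f, hrc1f, hnegpowM,
        show e1 ^ (3 ^ k) * (-g1) - (-g1) ^ (3 ^ k) * e1
          = -(e1 ^ (3 ^ k) * g1 - g1 ^ (3 ^ k) * e1) from by rw [hnegpowk]; ring,
        map_neg, ← hPv]
      ring
    have hz1mem : z1 ∈ L x1 := by
      rw [hLdef, hz1d]
      exact Finset.mem_insert_self _ _
    have hzc1mem : zc1 ∈ L x1 := by
      rw [hLdef, hzc1d]
      simp only [Finset.mem_insert, Finset.mem_singleton]
      tauto
    have hOmem : ∀ ω : K, ω ^ (3 ^ n + 1) = ι b →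
        (ω ^ (3 ^ k + 1)) ^ 2 - 2 * ι (ε * a) * (ω ^ (3 ^ k + 1))
          + ι (b ^ (3 ^ k + 1)) = 0 →
        ω ∈ ({z1, -z1, i * z1, -(i * z1)} : Finset K)
          ∪ ({zc1, -zc1, i * zc1, -(i * zc1)} : Finset K) := by
      intro ω hω1 hω2
      have hz1ne : z1 ≠ 0 := hlift_ne _ _ he1
      have hzc1ne : zc1 ≠ 0 := hlift_ne _ _ he1
      have hq1' := (hcond x1 hx1 _ hz1mem).2
      rcases vieta (ι (ε * a)) (ι (b ^ (3 ^ k + 1))) _ _ hq1' hω2 with hv | hv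
      · have hmem := quartet i hn0 hk0 hk hgcd hi2 hz1ne
          (by rw [hω1, (hcond x1 hx1 _ hz1mem).1]) hv
        apply Finset.mem_union_left
        simp only [Finset.mem_insert, Finset.mem_singleton]
        tauto
      · have hv' : ω ^ (3 ^ k + 1) = zc1 ^ (3 ^ k + 1) := by
          linear_combination hv - hrsum
        have hmem := quartet i hn0 hk0 hk hgcd hi2 hzc1ne
          (by rw [hω1, (hcond x1 hx1 _ hzc1mem).1]) hv'
        apply Finset.mem_union_right
        simp only [Finset.mem_insert, Finset.mem_singleton]
        tauto
    have hsubO : L x1 ∪ L x2 ∪ L x3 ⊆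
        ({z1, -z1, i * z1, -(i * z1)} : Finset K)
          ∪ ({zc1, -zc1, i * zc1, -(i * zc1)} : Finset K) := by
      intro ω hω
      simp only [Finset.mem_union] at hω
      rcases hω with (h | h) | h
      · exact hOmem ω (hcond x1 hx1 ω h).1 (hcond x1 hx1 ω h).2
      · exact hOmem ω (hcond x2 hx2 ω h).1 (hcond x2 hx2 ω h).2
      · exact hOmem ω (hcond x3 hx3 ω h).1 (hcond x3 hx3 ω h).2
    have hd12 := hdisj x1 x2 hx1 hx2 h12
    have hd13 := hdisj x1 x3 hx1 hx3 h13
    have hd23 := hdisj x2 x3 hx2 hx3 h23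
    have hcardU : (L x1 ∪ L x2 ∪ L x3).card = 12 := by
      rw [Finset.card_union_of_disjoint (Finset.disjoint_union_left.mpr ⟨hd13, hd23⟩),
        Finset.card_union_of_disjoint hd12,
        hcard4 x1 he1 hg1, hcard4 x2 he2 hg2, hcard4 x3 he3 hg3]
    have hle := Finset.card_le_card hsubO
    have hO8 : (({z1, -z1, i * z1, -(i * z1)} : Finset K)
        ∪ ({zc1, -zc1, i * zc1, -(i * zc1)} : Finset K)).card ≤ 8 := by
      refine le_trans (Finset.card_union_le _ _) ?_
      have h1 := card_le_four z1 (-z1) (i * z1) (-(i * z1))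
      have h2 := card_le_four zc1 (-zc1) (i * zc1) (-(i * zc1))
      omega
    omega
  -- if b = a^d, the mixed class matching the sign of a is empty
  have hdead : a ^ d = b → ∀ x1 : F,
      x1 ∉ ClsSet n d a b (a ^ ((3 ^ n - 1) / 2)) (-(a ^ ((3 ^ n - 1) / 2))) := by
    intro hba x1 hx1
    set σ : F := a ^ ((3 ^ n - 1) / 2) with hσ_def
    have hσ2 : σ ^ 2 = 1 := by
      rcases hεval a ha with h | h <;> rw [hσ_def, h] <;> norm_num
    obtain ⟨he0, hg0, hbx, hep, hgp⟩ := hdata σ (-σ) x1 hx1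
    have he00 : a ^ (d / 2) ≠ 0 := pow_ne_zero _ ha
    have he0M : (a ^ (d / 2)) ^ (3 ^ k + 1) = σ * a := hKEY a ha
    have hbM : b ^ (3 ^ k + 1) = a ^ 2 := by rw [← hba]; exact hKEY2 a ha
    have hb0 : (a ^ (d / 2)) ^ 2 + (0 : F) ^ 2 = b := by
      rw [hEsq, zero_pow (by norm_num : (2:ℕ) ≠ 0), add_zero, hba]
    obtain ⟨hz0n, hz0r, _, _, _⟩ := lift_conditions ι i hn hk hi2 hFfix hb0
    have hz0simp : ι (a ^ (d / 2)) + i * ι (0 : F) = ι (a ^ (d / 2)) := by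
      rw [map_zero]; ring
    have h0M : (0 : F) ^ (3 ^ k + 1) = 0 := zero_pow hMne
    have h0k : (0 : F) ^ (3 ^ k) = 0 := zero_pow (by positivity)
    have hz0rv : (ι (a ^ (d / 2))) ^ (3 ^ k + 1) = ι (σ * a) := by
      rw [← hz0simp, hz0r, h0M, he0M, h0k]
      simp
    have hz0nv : (ι (a ^ (d / 2))) ^ (3 ^ n + 1) = ι b := by
      rw [← hz0simp]; exact hz0n
    have hcoef : (x1 ^ (d / 2)) ^ (3 ^ k + 1) + ((x1 + a) ^ (d / 2)) ^ (3 ^ k + 1) = σ * a := by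
      rw [hep, hgp]; ring
    obtain ⟨hz1n, hz1q⟩ := hQM (σ * a) _ _ hbx hcoef
    have hBeq : ι (b ^ (3 ^ k + 1)) = (ι (σ * a)) ^ 2 := by
      rw [hbM, ← map_pow]
      congr 1
      rw [mul_pow, hσ2, one_mul]
    have hz1rv : (ι (x1 ^ (d / 2)) + i * ι ((x1 + a) ^ (d / 2))) ^ (3 ^ k + 1) = ι (σ * a) := by
      apply double_root
      rw [← hBeq]
      exact hz1q
    have hz0ne : ι (a ^ (d / 2)) ≠ 0 := by
      intro h
      exact he00 (ι.injective (by rw [h, map_zero]))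
    have hquart := quartet i hn0 hk0 hk hgcd hi2 hz0ne (by rw [hz1n, hz0nv])
      (by rw [hz1rv, hz0rv])
    rcases hquart with h | h | h | h
    · exact hg0 (hrep _ _ _ _ (h.trans hz0simp.symm)).2
    · have h2 : ι (x1 ^ (d / 2)) + i * ι ((x1 + a) ^ (d / 2)) = ι (-(a ^ (d / 2))) + i * ι 0 := by
        rw [h, map_neg, map_zero]; ring
      exact hg0 (hrep _ _ _ _ h2).2
    · have h2 : ι (x1 ^ (d / 2)) + i * ι ((x1 + a) ^ (d / 2)) = ι 0 + i * ι (a ^ (d / 2)) := by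
        rw [h, map_zero]; ring
      exact he0 (hrep _ _ _ _ h2).1
    · have h2 : ι (x1 ^ (d / 2)) + i * ι ((x1 + a) ^ (d / 2)) = ι 0 + i * ι (-(a ^ (d / 2))) := by
        rw [h, map_neg, map_zero]; ring
      exact he0 (hrep _ _ _ _ h2).1
  -- decomposition
  have hdec : {x : F | (x + a) ^ d + x ^ d = b} ⊆
      ({x : F | ((x + a) ^ d + x ^ d = b) ∧ (x = 0 ∨ x = -a)} ∪
        (ClsSet n d a b 1 1 ∪ (ClsSet n d a b 1 (-1) ∪
          (ClsSet n d a b (-1) 1 ∪ ClsSet n d a b (-1) (-1))))) := by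
    intro x hx
    simp only [Set.mem_setOf_eq] at hx
    by_cases h0 : x = 0
    · exact Or.inl ⟨hx, Or.inl h0⟩
    by_cases hA : x = -a
    · exact Or.inl ⟨hx, Or.inr hA⟩
    have hxa0 : x + a ≠ 0 := by
      intro h
      exact hA (eq_neg_of_add_eq_zero_left h)
    rcases hεval (x + a) hxa0 with h1 | h1 <;> rcases hεval x h0 with h2 | h2
    · exact Or.inr (Or.inl ⟨hx, h0, hxa0, h1, h2⟩)
    · exact Or.inr (Or.inr (Or.inl ⟨hx, h0, hxa0, h1, h2⟩))
    · exact Or.inr (Or.inr (Or.inr (Or.inl ⟨hx, h0, hxa0, h1, h2⟩)))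
    · exact Or.inr (Or.inr (Or.inr (Or.inr ⟨hx, h0, hxa0, h1, h2⟩)))
  have hTb : ({x : F | ((x + a) ^ d + x ^ d = b) ∧ (x = 0 ∨ x = -a)} : Set F).ncard ≤ 2 := by
    have hsub : ({x : F | ((x + a) ^ d + x ^ d = b) ∧ (x = 0 ∨ x = -a)} : Set F)
        ⊆ {0, -a} := fun x hx => hx.2
    calc ({x : F | ((x + a) ^ d + x ^ d = b) ∧ (x = 0 ∨ x = -a)} : Set F).ncard
        ≤ ({0, -a} : Set F).ncard := Set.ncard_le_ncard hsub (Set.toFinite _)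
    _ ≤ ({-a} : Set F).ncard + 1 := Set.ncard_insert_le _ _
    _ ≤ 2 := by rw [Set.ncard_singleton]
  have hchain : ∀ s1 s2 s3 s4 s5 : Set F,
      (s1 ∪ (s2 ∪ (s3 ∪ (s4 ∪ s5)))).ncard ≤
        s1.ncard + (s2.ncard + (s3.ncard + (s4.ncard + s5.ncard))) := by
    intro s1 s2 s3 s4 s5
    calc (s1 ∪ (s2 ∪ (s3 ∪ (s4 ∪ s5)))).ncard
        ≤ s1.ncard + (s2 ∪ (s3 ∪ (s4 ∪ s5))).ncard := Set.ncard_union_le _ _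
    _ ≤ s1.ncard + (s2.ncard + (s3 ∪ (s4 ∪ s5)).ncard) := by
        have := Set.ncard_union_le s2 (s3 ∪ (s4 ∪ s5)); omega
    _ ≤ s1.ncard + (s2.ncard + (s3.ncard + (s4 ∪ s5).ncard)) := by
        have := Set.ncard_union_le s3 (s4 ∪ s5); omega
    _ ≤ s1.ncard + (s2.ncard + (s3.ncard + (s4.ncard + s5.ncard))) := by
        have := Set.ncard_union_le s4 s5; omega
  have hmain := le_trans (Set.ncard_le_ncard hdec (Set.toFinite _)) (hchain _ _ _ _ _)
  have hp1 : (ClsSet n d a b 1 1).ncard ≤ 1 := ncard_le_one_of _ (hpure 1)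
  have hp2 : (ClsSet n d a b (-1) (-1)).ncard ≤ 1 := by
    have := ncard_le_one_of _ (hpure (-1))
    exact this
  have hm1 : (ClsSet n d a b 1 (-1)).ncard ≤ 2 := hmixed 1
  have hm2 : (ClsSet n d a b (-1) 1).ncard ≤ 2 := by
    have := hmixed (-1)
    rwa [neg_neg] at this
  by_cases hba : a ^ d = b
  · -- one mixed class is empty
    rcases hεval a ha with hσ | hσ
    · have hempty : ClsSet n d a b 1 (-1) = ∅ := by
        rw [Set.eq_empty_iff_forall_notMem]
        intro x hx
        exact hdead hba x (by rwa [hσ])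
      rw [hempty] at hmain
      simp only [Set.ncard_empty] at hmain
      omega
    · have hempty : ClsSet n d a b (-1) 1 = ∅ := by
        rw [Set.eq_empty_iff_forall_notMem]
        intro x hx
        apply hdead hba x
        rw [hσ, neg_neg]
        exact hx
      rw [hempty] at hmain
      simp only [Set.ncard_empty] at hmain
      omega
  · -- no trivial solutions
    have hTempty : ({x : F | ((x + a) ^ d + x ^ d = b) ∧ (x = 0 ∨ x = -a)} : Set F) = ∅ := by
      rw [Set.eq_empty_iff_forall_notMem]
      rintro x ⟨hsol, h0 | hA⟩
      · subst h0
        rw [zero_add, zero_pow hd0.ne', add_zero] at hsol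
        exact hba hsol
      · subst hA
        rw [neg_add_cancel, zero_pow hd0.ne', zero_add, hd.neg_pow] at hsol
        exact hba hsol
    rw [hTempty] at hmain
    simp only [Set.ncard_empty] at hmain
    omega
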